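/- For ε < -1/15, the equation ε = (4x² - 3x)/(10 - 5x) has no solution x satisfying 3/4 + (15/4)ε < x < 3/4 + (5/4)ε (equivalently, (4/5)x - 3/5 < ε < (4/15)x - 1/5). -/

import Mathlib

/-- For ε < -1/15, there is no x in the sliding region with
ε = (4x² - 3x)/(10 - 5x). -/
theorem welander_no_pseudoeq (ε : ℝ) (hε : ε < -1/15) :
    ¬ ∃ x : ℝ, 3/4 + 15/4 * ε < x ∧ x < 3/4 + 5/4 * ε ∧
      ε = (4 * x ^ 2 - 3 * x) / (10 - 5 * x) := by
  rintro ⟨x, h1, h2, h3⟩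
  have hx : x < 2/3 := by linarith
  have hd : (10 : ℝ) - 5 * x > 0 := by linarith
  have heq : ε * (10 - 5 * x) = 4 * x ^ 2 - 3 * x := by
    rw [h3, div_mul_cancel₀ _ hd.ne']
  -- from h1: 15 ε < 4x - 3, multiply by (10-5x) > 0 gives (2x-1)(4x-3) > 0
  have hq : (2 * x - 1) * (4 * x - 3) > 0 := by nlinarith [mul_pos hd hd]
  have hx2 : x > 1/2 := by nlinarith
  -- from hε: ε(10-5x) < -(10-5x)/15 gives (3x-1)(2x-1) < 0
  nlinarith [mul_pos hd hd]
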